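/- Let A ∈ {0,1}^{n×n} be a square matrix with all diagonal entries 0, and let G be the upper graph of A, i.e., the graph on [n] with edges {i,j} (i<j) exactly when A_{i,j}=1. If the VC-dimension of G is at least 4d, then the VC-dimension of A is at least d. Equivalently, if VCdim(A) ≤ d then VCdim(G) ≤ 4d+3. -/

import Mathlib

/-- A set `R` of rows is shattered by the columns of `A`: every 0/1 pattern on `R`
is realized by some column. -/
def colShat {m n : ℕ} (A : Fin m → Fin n → Bool) (R : Finset (Fin m)) : Prop :=
  ∀ p : Fin m → Bool, ∃ j : Fin n, ∀ i ∈ R, A i j = p i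

/-- A set `C` of columns is shattered by the rows of `A`. -/
def rowShat {m n : ℕ} (A : Fin m → Fin n → Bool) (C : Finset (Fin n)) : Prop :=
  ∀ p : Fin n → Bool, ∃ i : Fin m, ∀ j ∈ C, A i j = p j

/-- The VC-dimension of a binary matrix: the maximum of the VC-dimensions of its
column set system and its row set system. -/
noncomputable def matVC {m n : ℕ} (A : Fin m → Fin n → Bool) : ℕ :=
  sSup {k | (∃ R : Finset (Fin m), R.card = k ∧ colShat A R) ∨
            (∃ C : Finset (Fin n), C.card = k ∧ rowShat A C)}

/-- The VC-dimension of the neighborhood set system of a graph given by a Boolean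
adjacency relation `adj` on a finite vertex type. -/
noncomputable def graphVC {W : Type*} [Fintype W] (adj : W → W → Bool) : ℕ :=
  sSup {k | ∃ X : Finset W, X.card = k ∧
    ∀ p : W → Bool, ∃ v : W, ∀ u ∈ X, adj u v = p u}

/-- The upper graph of a square matrix `A`: `i ~ j` (for `i < j`) iff `A i j = 1`. -/
def upperAdj {n : ℕ} (A : Fin n → Fin n → Bool) (i j : Fin n) : Bool :=
  if i < j then A i j else if j < i then A j i else false





lemma sum_choose_lt {d : ℕ} (hd : 1 ≤ d) :
    ∑ i ∈ Finset.range d, (2*d).choose i < 2^(2*d-1) := by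
  set n := 2*d with hn
  have hdn : d ≤ n := by omega
  have hrefl : ∑ i ∈ Finset.range d, n.choose i
      = ∑ i ∈ Finset.Ico (d+1) (n+1), n.choose i := by
    rw [Finset.range_eq_Ico]
    refine Finset.sum_nbij' (fun i => n - i) (fun j => n - j) ?_ ?_ ?_ ?_ ?_
    · intro a ha; simp only [Finset.mem_Ico] at *; omega
    · intro a ha; simp only [Finset.mem_Ico] at *; omega
    · intro a ha; simp only [Finset.mem_Ico] at ha; omega
    · intro a ha; simp only [Finset.mem_Ico] at ha; omega
    · intro a ha; simp only [Finset.mem_Ico] at ha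
      rw [Nat.choose_symm (by omega)]
  have htot : ∑ i ∈ Finset.range (n+1), n.choose i = 2^n := Nat.sum_range_choose n
  have hsplit1 : ∑ i ∈ Finset.range (n+1), n.choose i
      = ∑ i ∈ Finset.range d, n.choose i + ∑ i ∈ Finset.Ico d (n+1), n.choose i := by
    rw [Finset.range_eq_Ico, Finset.range_eq_Ico]
    exact (Finset.sum_Ico_consecutive (fun i => n.choose i) (m := 0) (n := d) (k := n+1) (by omega) (by omega)).symm
  have hsplit2 : ∑ i ∈ Finset.Ico d (n+1), n.choose i
      = n.choose d + ∑ i ∈ Finset.Ico (d+1) (n+1), n.choose i :=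
    Finset.sum_eq_sum_Ico_succ_bot (by omega) _
  have hpos : 1 ≤ n.choose d := Nat.choose_pos hdn
  have hpow : 2^n = 2 * 2^(n-1) := by
    calc 2^n = 2^((n-1)+1) := by congr 1; omega
      _ = 2 * 2^(n-1) := by rw [pow_succ']
  omega

lemma sauer_half {n d : ℕ} (hd : 1 ≤ d) (S : Finset (Fin n)) (hS : S.card = 2*d)
    (𝒜 : Finset (Finset (Fin n))) (h𝒜S : ∀ B ∈ 𝒜, B ⊆ S)
    (hcard : 2^(2*d-1) ≤ 𝒜.card) :
    ∃ s ⊆ S, s.card = d ∧ 𝒜.Shatters s := by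
  by_contra hcon
  push_neg at hcon
  have hsub : 𝒜.shatterer ⊆ S.powerset.filter (fun s => s.card < d) := by
    intro s hs
    rw [Finset.mem_shatterer] at hs
    obtain ⟨B, hB, hsB⟩ := hs.exists_superset
    have hsS : s ⊆ S := hsB.trans (h𝒜S B hB)
    rw [Finset.mem_filter, Finset.mem_powerset]
    refine ⟨hsS, ?_⟩
    by_contra hge
    push_neg at hge
    obtain ⟨s', hs's, hs'card⟩ := Finset.exists_subset_card_eq hge
    exact hcon s' (hs's.trans hsS) hs'card (hs.mono_right hs's)
  have hfilter : (S.powerset.filter (fun s => s.card < d)).card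
      ≤ ∑ i ∈ Finset.range d, (2*d).choose i := by
    have hsub2 : S.powerset.filter (fun s => s.card < d)
        ⊆ (Finset.range d).biUnion (fun i => S.powersetCard i) := by
      intro s hs
      rw [Finset.mem_filter, Finset.mem_powerset] at hs
      rw [Finset.mem_biUnion]
      exact ⟨s.card, Finset.mem_range.2 hs.2, Finset.mem_powersetCard.2 ⟨hs.1, rfl⟩⟩
    calc (S.powerset.filter (fun s => s.card < d)).card
        ≤ ((Finset.range d).biUnion (fun i => S.powersetCard i)).card :=
          Finset.card_le_card hsub2
      _ ≤ ∑ i ∈ Finset.range d, (S.powersetCard i).card := Finset.card_biUnion_le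
      _ = ∑ i ∈ Finset.range d, (2*d).choose i := by
          apply Finset.sum_congr rfl
          intro i _
          rw [Finset.card_powersetCard, hS]
  have := Finset.card_le_card_shatterer 𝒜
  have := Finset.card_le_card hsub
  have := sum_choose_lt (d := d) hd
  omega



lemma exists_lower {n : ℕ} (X : Finset (Fin n)) :
    ∀ a, a ≤ X.card → ∃ L ⊆ X, L.card = a ∧ ∀ x ∈ L, ∀ y ∈ X \ L, x < y := by
  intro a
  induction a with
  | zero => intro _; exact ⟨∅, Finset.empty_subset X, rfl, by simp⟩
  | succ a ih =>
    intro ha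
    obtain ⟨L, hLX, hLcard, hord⟩ := ih (by omega)
    have hne : (X \ L).Nonempty := by
      rw [← Finset.card_pos, Finset.card_sdiff_of_subset hLX]; omega
    set m := (X \ L).min' hne with hm
    have hmmem : m ∈ X \ L := Finset.min'_mem _ _
    have hmX : m ∈ X := (Finset.mem_sdiff.1 hmmem).1
    have hmL : m ∉ L := (Finset.mem_sdiff.1 hmmem).2
    refine ⟨insert m L, Finset.insert_subset hmX hLX, ?_, ?_⟩
    · rw [Finset.card_insert_of_notMem hmL, hLcard]
    · intro x hx y hy
      rw [Finset.mem_sdiff] at hy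
      have hyL : y ∈ X \ L :=
        Finset.mem_sdiff.2 ⟨hy.1, fun h => hy.2 (Finset.mem_insert_of_mem h)⟩
      rw [Finset.mem_insert] at hx
      rcases hx with rfl | hx
      · have h1 := (X \ L).min'_le y hyL
        have h2 : y ≠ m := fun h => hy.2 (h ▸ Finset.mem_insert_self _ _)
        exact lt_of_le_of_ne h1 (Ne.symm h2)
      · exact hord x hx y hyL

lemma trace_shatter {n d : ℕ} (hd : 1 ≤ d) (S : Finset (Fin n)) (hS : S.card = 2*d)
    (g : Fin n → Fin n → Bool)
    (hcard : 2^(2*d-1) ≤ (Finset.univ.image (fun j : Fin n => S.filter (fun i => g i j))).card) :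
    ∃ R : Finset (Fin n), R.card = d ∧ ∀ p : Fin n → Bool, ∃ j : Fin n, ∀ i ∈ R, g i j = p i := by
  classical
  obtain ⟨s, hsS, hscard, hshat⟩ := sauer_half hd S hS _
    (by
      intro B hB
      rw [Finset.mem_image] at hB
      obtain ⟨j, _, rfl⟩ := hB
      exact Finset.filter_subset _ _) hcard
  refine ⟨s, hscard, ?_⟩
  intro p
  have ht : s.filter (fun i => p i = true) ⊆ s := Finset.filter_subset _ _
  obtain ⟨B, hB, hsB⟩ := hshat ht
  rw [Finset.mem_image] at hB
  obtain ⟨j, _, rfl⟩ := hB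
  refine ⟨j, fun i hi => ?_⟩
  have h1 : i ∈ s ∩ S.filter (fun i => g i j) ↔ i ∈ s.filter (fun i => p i = true) := by
    rw [hsB]
  simp only [Finset.mem_inter, Finset.mem_filter, hi, hsS hi, true_and] at h1
  revert h1
  cases hgi : g i j <;> cases hpi : p i <;> simp

lemma main_key {n d : ℕ} (A : Fin n → Fin n → Bool) (hd : 1 ≤ d)
    (X : Finset (Fin n)) (hX : X.card = 4*d)
    (hshat : ∀ p : Fin n → Bool, ∃ v : Fin n, ∀ u ∈ X, upperAdj A u v = p u) :
    (∃ R : Finset (Fin n), R.card = d ∧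
        ∀ p : Fin n → Bool, ∃ j : Fin n, ∀ i ∈ R, A i j = p i) ∨
    (∃ C : Finset (Fin n), C.card = d ∧
        ∀ p : Fin n → Bool, ∃ i : Fin n, ∀ j ∈ C, A i j = p j) := by
  classical
  obtain ⟨L, hLX, hLcard, hord⟩ := exists_lower X (2*d) (by omega)
  set U := X \ L with hUdef
  have hUX : U ⊆ X := Finset.sdiff_subset
  have hUcard : U.card = 2*d := by rw [hUdef, Finset.card_sdiff_of_subset hLX]; omega
  have hdisj : Disjoint L U := Finset.disjoint_sdiff
  set pat : Finset (Fin n) × Finset (Fin n) → Fin n → Bool :=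
    fun st u => decide (u ∈ st.1 ∪ st.2) with hpatdef
  set w : Finset (Fin n) × Finset (Fin n) → Fin n :=
    fun st => Classical.choose (hshat (pat st)) with hwdef
  have hwspec : ∀ st, ∀ u ∈ X, upperAdj A u (w st) = pat st u :=
    fun st => Classical.choose_spec (hshat (pat st))
  set P := L.powerset ×ˢ U.powerset with hPdef
  have hPcard : P.card = 2 * (2^(2*d) * 2^(2*d-1)) := by
    rw [hPdef, Finset.card_product, Finset.card_powerset, Finset.card_powerset,
      hLcard, hUcard]
    have h1 : (2:ℕ)^(2*d) = 2 * 2^(2*d-1) := by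
      calc (2:ℕ)^(2*d) = 2^(1+(2*d-1)) := by congr 1; omega
        _ = 2 * 2^(2*d-1) := by rw [pow_add, pow_one]
    calc (2:ℕ)^(2*d) * 2^(2*d) = 2^(2*d) * (2 * 2^(2*d-1)) := by rw [← h1]
      _ = 2 * (2^(2*d) * 2^(2*d-1)) := by ring
  set H := P.filter (fun st => ∀ u ∈ L, u < w st) with hHdef
  set K := P.filter (fun st => ¬ ∀ u ∈ L, u < w st) with hKdef
  have hHK : H.card + K.card = P.card :=
    Finset.card_filter_add_card_filter_not _
  -- facts about members of H
  have keyH : ∀ st ∈ H, L.filter (fun i => A i (w st)) = st.1 := by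
    intro st hst
    have hstHi : ∀ u ∈ L, u < w st := (Finset.mem_filter.1 hst).2
    have hstP := (Finset.mem_filter.1 hst).1
    rw [hPdef, Finset.mem_product, Finset.mem_powerset, Finset.mem_powerset] at hstP
    ext i
    simp only [Finset.mem_filter]
    have hpatval : ∀ u, pat st u = decide (u ∈ st.1 ∪ st.2) := fun u => rfl
    constructor
    · rintro ⟨hiL, hiA⟩
      have hspec := hwspec st i (hLX hiL)
      rw [upperAdj, if_pos (hstHi i hiL), hiA] at hspec
      have hmem : i ∈ st.1 ∪ st.2 := by
        rw [hpatval] at hspec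
        simpa using hspec.symm
      rcases Finset.mem_union.1 hmem with h | h
      · exact h
      · exact absurd (hstP.2 h) (Finset.disjoint_left.1 hdisj hiL)
    · intro hi1
      have hiL : i ∈ L := hstP.1 hi1
      refine ⟨hiL, ?_⟩
      have hspec := hwspec st i (hLX hiL)
      rw [upperAdj, if_pos (hstHi i hiL)] at hspec
      rw [hspec, hpatval]
      simp [Finset.mem_union, hi1]
  -- facts about members of K
  have keyK : ∀ st ∈ K, U.filter (fun u => A (w st) u) = st.2 := by
    intro st hst
    have hstK : ¬ ∀ u ∈ L, u < w st := (Finset.mem_filter.1 hst).2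
    push_neg at hstK
    obtain ⟨u₀, hu₀L, hu₀⟩ := hstK
    have hstLo : ∀ u ∈ U, w st < u := by
      intro u hu
      exact lt_of_le_of_lt hu₀ (hord u₀ hu₀L u (hUdef ▸ hu))
    have hstP := (Finset.mem_filter.1 hst).1
    rw [hPdef, Finset.mem_product, Finset.mem_powerset, Finset.mem_powerset] at hstP
    ext u
    simp only [Finset.mem_filter]
    have hpatval : ∀ u, pat st u = decide (u ∈ st.1 ∪ st.2) := fun u => rfl
    constructor
    · rintro ⟨huU, huA⟩
      have hspec := hwspec st u (hUX huU)
      have hlt := hstLo u huU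
      rw [upperAdj, if_neg (by exact fun h => absurd (h.trans hlt) (lt_irrefl _)),
        if_pos hlt, huA] at hspec
      have hmem : u ∈ st.1 ∪ st.2 := by
        rw [hpatval] at hspec
        simpa using hspec.symm
      rcases Finset.mem_union.1 hmem with h | h
      · exact absurd (hstP.1 h) (Finset.disjoint_right.1 hdisj huU)
      · exact h
    · intro hu2
      have huU : u ∈ U := hstP.2 hu2
      refine ⟨huU, ?_⟩
      have hspec := hwspec st u (hUX huU)
      have hlt := hstLo u huU
      rw [upperAdj, if_neg (by exact fun h => absurd (h.trans hlt) (lt_irrefl _)),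
        if_pos hlt] at hspec
      rw [hspec, hpatval]
      simp [Finset.mem_union, hu2]
  by_cases hcase : 2^(2*d) * 2^(2*d-1) ≤ H.card
  · left
    obtain ⟨t₀, _, hfib⟩ := Finset.exists_le_card_fiber_of_mul_le_card_of_maps_to
      (f := Prod.snd) (t := U.powerset) (s := H)
      (fun st hst => (Finset.mem_product.1 (Finset.mem_filter.1 hst).1).2)
      (Finset.powerset_nonempty U)
      (by rw [Finset.card_powerset, hUcard]; exact hcase)
    set fib := H.filter (fun st => st.2 = t₀) with hfibdef
    have hinj : Set.InjOn Prod.fst (fib : Set (Finset (Fin n) × Finset (Fin n))) := by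
      intro a ha b hb hab
      have ha2 := (Finset.mem_filter.1 (Finset.mem_coe.1 ha)).2
      have hb2 := (Finset.mem_filter.1 (Finset.mem_coe.1 hb)).2
      exact Prod.ext hab (ha2.trans hb2.symm)
    have himg : fib.image Prod.fst
        ⊆ Finset.univ.image (fun j : Fin n => L.filter (fun i => A i j)) := by
      intro s hs
      rw [Finset.mem_image] at hs
      obtain ⟨st, hst, rfl⟩ := hs
      rw [Finset.mem_image]
      exact ⟨w st, Finset.mem_univ _, keyH st (Finset.mem_filter.1 hst).1⟩
    have hcard2 : 2^(2*d-1)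
        ≤ (Finset.univ.image (fun j : Fin n => L.filter (fun i => A i j))).card := by
      calc 2^(2*d-1) ≤ fib.card := hfib
        _ = (fib.image Prod.fst).card := (Finset.card_image_of_injOn hinj).symm
        _ ≤ _ := Finset.card_le_card himg
    exact trace_shatter hd L hLcard A hcard2
  · right
    have hKcard : 2^(2*d) * 2^(2*d-1) ≤ K.card := by omega
    obtain ⟨s₀, _, hfib⟩ := Finset.exists_le_card_fiber_of_mul_le_card_of_maps_to
      (f := Prod.fst) (t := L.powerset) (s := K)
      (fun st hst => (Finset.mem_product.1 (Finset.mem_filter.1 hst).1).1)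
      (Finset.powerset_nonempty L)
      (by rw [Finset.card_powerset, hLcard]; exact hKcard)
    set fib := K.filter (fun st => st.1 = s₀) with hfibdef
    have hinj : Set.InjOn Prod.snd (fib : Set (Finset (Fin n) × Finset (Fin n))) := by
      intro a ha b hb hab
      have ha2 := (Finset.mem_filter.1 (Finset.mem_coe.1 ha)).2
      have hb2 := (Finset.mem_filter.1 (Finset.mem_coe.1 hb)).2
      exact Prod.ext (ha2.trans hb2.symm) hab
    have himg : fib.image Prod.snd
        ⊆ Finset.univ.image (fun v : Fin n => U.filter (fun u => A v u)) := by
      intro s hs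
      rw [Finset.mem_image] at hs
      obtain ⟨st, hst, rfl⟩ := hs
      rw [Finset.mem_image]
      exact ⟨w st, Finset.mem_univ _, keyK st (Finset.mem_filter.1 hst).1⟩
    have hcard2 : 2^(2*d-1)
        ≤ (Finset.univ.image (fun v : Fin n => U.filter (fun u => A v u))).card := by
      calc 2^(2*d-1) ≤ fib.card := hfib
        _ = (fib.image Prod.snd).card := (Finset.card_image_of_injOn hinj).symm
        _ ≤ _ := Finset.card_le_card himg
    obtain ⟨C, hCcard, hC⟩ :=
      trace_shatter hd U hUcard (fun u v => A v u) hcard2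
    exact ⟨C, hCcard, hC⟩

lemma graph_to_mat {n : ℕ} (A : Fin n → Fin n → Bool) {d : ℕ} (hd : 1 ≤ d)
    (h : 4*d ≤ graphVC (upperAdj A)) : d ≤ matVC A := by
  classical
  set SG := {k | ∃ X : Finset (Fin n), X.card = k ∧
    ∀ p : Fin n → Bool, ∃ v : Fin n, ∀ u ∈ X, upperAdj A u v = p u} with hSG
  have hbdd : BddAbove SG := by
    refine ⟨n, fun k hk => ?_⟩
    obtain ⟨X, hX, _⟩ := hk
    rw [← hX]
    calc X.card ≤ (Finset.univ : Finset (Fin n)).card := Finset.card_le_univ X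
      _ = n := by simp
  have hGV : graphVC (upperAdj A) = sSup SG := rfl
  have hne : SG.Nonempty := by
    by_contra hne
    rw [Set.not_nonempty_iff_eq_empty] at hne
    rw [hGV, hne, csSup_empty] at h
    have hb : (⊥ : ℕ) = 0 := rfl
    omega
  have hmem := Nat.sSup_mem hne hbdd
  rw [← hGV] at hmem
  obtain ⟨X, hXcard, hXshat⟩ := hmem
  rw [hGV] at h
  obtain ⟨Y, hYX, hYcard⟩ := Finset.exists_subset_card_eq (show 4*d ≤ X.card by omega)
  have hYshat : ∀ p : Fin n → Bool, ∃ v : Fin n, ∀ u ∈ Y, upperAdj A u v = p u := by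
    intro p; obtain ⟨v, hv⟩ := hXshat p; exact ⟨v, fun u hu => hv u (hYX hu)⟩
  have hkey := main_key A hd Y hYcard hYshat
  have hbdd2 : BddAbove {k | (∃ R : Finset (Fin n), R.card = k ∧ colShat A R) ∨
      (∃ C : Finset (Fin n), C.card = k ∧ rowShat A C)} := by
    refine ⟨n, fun k hk => ?_⟩
    rcases hk with ⟨R, hR, _⟩ | ⟨C, hC, _⟩
    · rw [← hR]
      calc R.card ≤ (Finset.univ : Finset (Fin n)).card := Finset.card_le_univ R
        _ = n := by simp
    · rw [← hC]
      calc C.card ≤ (Finset.univ : Finset (Fin n)).card := Finset.card_le_univ C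
        _ = n := by simp
  have hdmem : d ∈ {k | (∃ R : Finset (Fin n), R.card = k ∧ colShat A R) ∨
      (∃ C : Finset (Fin n), C.card = k ∧ rowShat A C)} := by
    rcases hkey with ⟨R, hR, hRs⟩ | ⟨C, hC, hCs⟩
    · exact Or.inl ⟨R, hR, hRs⟩
    · exact Or.inr ⟨C, hC, hCs⟩
  exact le_csSup hbdd2 hdmem

/-- Let `A` be a square 0-diagonal matrix and `G` its upper graph.
If `VCdim(G) ≥ 4d` then `VCdim(A) ≥ d`; equivalently, if `VCdim(A) ≤ d` then
`VCdim(G) ≤ 4d + 3`. -/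
theorem vc_of_upper_graph {n : ℕ} (A : Fin n → Fin n → Bool)
    (hdiag : ∀ i, A i i = false) (d : ℕ) :
    (4 * d ≤ graphVC (upperAdj A) → d ≤ matVC A) ∧
    (matVC A ≤ d → graphVC (upperAdj A) ≤ 4 * d + 3) := by
  constructor
  · intro h
    rcases Nat.eq_zero_or_pos d with rfl | hd
    · exact Nat.zero_le _
    · exact graph_to_mat A hd h
  · intro hm
    by_contra hlt
    push_neg at hlt
    have h4 : 4*(d+1) ≤ graphVC (upperAdj A) := by omega
    have := graph_to_mat A (d := d+1) (by omega) h4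
    omega
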